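/- (Scaling lemma for item-pricing revenue) For a single unit-demand buyer with value distribution D, any achievable item-pricing allocation x with revenue R, and any scalar 0 ≤ t ≤ 1, there exists a randomized item pricing with expected allocation vector exactly t·x and expected revenue at least t·R. Consequently SRev(D, t·x) ≥ t·SRev(D, x). -/
import Mathlib


open scoped Classical

/-- `Buys v p T j` : a unit-demand buyer of type `v`, facing item prices `p` with
available item set `T`, purchases item `j` (least-index maximizer of `v k - p k` over
`T`, provided the maximum utility is nonnegative). -/
def Buys {m : ℕ} (v p : Fin m → ℝ) (T : Finset (Fin m)) (j : Fin m) : Prop :=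
  j ∈ T ∧ 0 ≤ v j - p j ∧ ∀ k ∈ T, v k - p k < v j - p j ∨ (v k - p k = v j - p j ∧ j ≤ k)

/-- Probability (over the finite-support distribution of types `V` with weights `w`)
that item `j` is sold under item pricing `p` with all items available. -/
noncomputable def allocD {m k : ℕ} (V : Fin k → Fin m → ℝ) (w : Fin k → ℝ)
    (p : Fin m → ℝ) (j : Fin m) : ℝ :=
  ∑ t, w t * (if Buys (V t) p Finset.univ j then (1 : ℝ) else 0)

/-- Expected revenue of item pricing `p` with all items available. -/
noncomputable def revD {m k : ℕ} (V : Fin k → Fin m → ℝ) (w : Fin k → ℝ)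
    (p : Fin m → ℝ) : ℝ :=
  ∑ t, w t * ∑ j, (if Buys (V t) p Finset.univ j then p j else 0)

/-- `Achievable V w x R` : some (finite-support) distribution over item pricings has
expected allocation of each item `j` at most `x j` and expected revenue `R`. -/
def Achievable {m k : ℕ} (V : Fin k → Fin m → ℝ) (w : Fin k → ℝ)
    (x : Fin m → ℝ) (R : ℝ) : Prop :=
  ∃ (l : ℕ) (β : Fin l → ℝ) (Q : Fin l → Fin m → ℝ),
    (∀ s, 0 ≤ β s) ∧ (∑ s, β s = 1) ∧
    (∀ j, ∑ s, β s * allocD V w (Q s) j ≤ x j) ∧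
    R = ∑ s, β s * revD V w (Q s)

/-- `SRev V w x` : the optimal expected revenue over distributions of item pricings
whose expected allocation vector is componentwise at most `x`. -/
noncomputable def SRev {m k : ℕ} (V : Fin k → Fin m → ℝ) (w : Fin k → ℝ)
    (x : Fin m → ℝ) : ℝ :=
  sSup {R | Achievable V w x R}


section Helpers

variable {m k : ℕ} (V : Fin k → Fin m → ℝ) (w : Fin k → ℝ)

/-- A "sell nothing" price vector. -/
noncomputable def bigP : Fin m → ℝ := fun j => 1 + ∑ t', |V t' j|

lemma not_buys_bigP (t : Fin k) (j : Fin m) : ¬ Buys (V t) (bigP V) Finset.univ j := by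
  intro ⟨_, h0, _⟩
  have h1 : V t j ≤ ∑ t', |V t' j| :=
    le_trans (le_abs_self _) (Finset.single_le_sum (f := fun t' => |V t' j|) (fun i _ => abs_nonneg _) (Finset.mem_univ t))
  have : V t j - bigP V j < 0 := by
    simp only [bigP]; linarith
  linarith

lemma allocD_bigP (j : Fin m) : allocD V w (bigP V) j = 0 := by
  unfold allocD
  refine Finset.sum_eq_zero fun t _ => ?_
  rw [if_neg (not_buys_bigP V t j), mul_zero]

lemma revD_bigP : revD V w (bigP V) = 0 := by
  unfold revD
  refine Finset.sum_eq_zero fun t _ => ?_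
  rw [Finset.sum_eq_zero fun j _ => if_neg (not_buys_bigP V t j), mul_zero]

lemma allocD_nonneg (hw : ∀ t', 0 ≤ w t') (p : Fin m → ℝ) (j : Fin m) :
    0 ≤ allocD V w p j :=
  Finset.sum_nonneg fun t _ => mul_nonneg (hw t) (by positivity)

lemma revD_le (hw : ∀ t', 0 ≤ w t') (p : Fin m → ℝ) :
    revD V w p ≤ ∑ t', w t' * ∑ j, max 0 (V t' j) := by
  refine Finset.sum_le_sum fun t _ => mul_le_mul_of_nonneg_left ?_ (hw t)
  refine Finset.sum_le_sum fun j _ => ?_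
  by_cases h : Buys (V t) p Finset.univ j
  · rw [if_pos h]
    have := h.2.1
    have : p j ≤ V t j := by linarith
    exact le_trans this (le_max_right _ _)
  · rw [if_neg h]; exact le_max_left _ _

/-- Core scaling construction. -/
lemma scale_core (hw : ∀ t', 0 ≤ w t') {t : ℝ} (ht0 : 0 ≤ t) (ht1 : t ≤ 1)
    (l : ℕ) (β : Fin l → ℝ) (Q : Fin l → Fin m → ℝ)
    (hβ : ∀ s, 0 ≤ β s) (hβ1 : ∑ s, β s = 1) :
    ∃ (l' : ℕ) (β' : Fin l' → ℝ) (Q' : Fin l' → Fin m → ℝ),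
      (∀ s, 0 ≤ β' s) ∧ (∑ s, β' s = 1) ∧
      (∀ j, ∑ s, β' s * allocD V w (Q' s) j = t * ∑ s, β s * allocD V w (Q s) j) ∧
      (∑ s, β' s * revD V w (Q' s) = t * ∑ s, β s * revD V w (Q s)) := by
  refine ⟨l + 1, Fin.snoc (fun s => t * β s) (1 - t), Fin.snoc Q (bigP V), ?_, ?_, ?_, ?_⟩
  · intro s
    refine Fin.lastCases ?_ (fun i => ?_) s
    · simp only [Fin.snoc_last]; linarith
    · simp only [Fin.snoc_castSucc]; exact mul_nonneg ht0 (hβ i)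
  · rw [Fin.sum_univ_castSucc]
    simp only [Fin.snoc_castSucc, Fin.snoc_last]
    rw [← Finset.mul_sum, hβ1]; ring
  · intro j
    rw [Fin.sum_univ_castSucc]
    simp only [Fin.snoc_castSucc, Fin.snoc_last, allocD_bigP, mul_zero, add_zero]
    rw [Finset.mul_sum]
    exact Finset.sum_congr rfl fun s _ => by ring
  · rw [Fin.sum_univ_castSucc]
    simp only [Fin.snoc_castSucc, Fin.snoc_last, revD_bigP, mul_zero, add_zero]
    rw [Finset.mul_sum]
    exact Finset.sum_congr rfl fun s _ => by ring

lemma bddAbove_achievable (hw : ∀ t', 0 ≤ w t') (x : Fin m → ℝ) :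
    BddAbove {R | Achievable V w x R} := by
  refine ⟨∑ t', w t' * ∑ j, max 0 (V t' j), fun R hR => ?_⟩
  obtain ⟨l, β, Q, hβ, hβ1, _, hRe⟩ := hR
  rw [hRe]
  calc ∑ s, β s * revD V w (Q s)
      ≤ ∑ s, β s * (∑ t', w t' * ∑ j, max 0 (V t' j)) :=
        Finset.sum_le_sum fun s _ => mul_le_mul_of_nonneg_left (revD_le V w hw (Q s)) (hβ s)
    _ = _ := by rw [← Finset.sum_mul, hβ1, one_mul]

lemma zero_achievable (hw : ∀ t', 0 ≤ w t') (x : Fin m → ℝ)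
    (hne : {R | Achievable V w x R}.Nonempty) : Achievable V w x 0 := by
  obtain ⟨R, l, β, Q, hβ, hβ1, hal, _⟩ := hne
  refine ⟨1, fun _ => 1, fun _ => bigP V, fun _ => zero_le_one, by simp, fun j => ?_, by
    simp [revD_bigP]⟩
  have h0 : 0 ≤ ∑ s, β s * allocD V w (Q s) j :=
    Finset.sum_nonneg fun s _ => mul_nonneg (hβ s) (allocD_nonneg V w hw (Q s) j)
  simpa [allocD_bigP] using le_trans h0 (hal j)

end Helpers

/-- scaling lemma for item-pricing revenue: if some randomized item
pricing has expected allocation vector exactly `x` and expected revenue `R`, then for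
any `0 ≤ t ≤ 1` there is a randomized item pricing with expected allocation exactly
`t·x` and expected revenue at least `t·R`; consequently
`SRev(D, t·x) ≥ t·SRev(D, x)`. -/
theorem stmt13 {m k : ℕ} (V : Fin k → Fin m → ℝ) (w : Fin k → ℝ)
    (hw : ∀ t', 0 ≤ w t') (hw1 : ∑ t', w t' = 1)
    (x : Fin m → ℝ) (t : ℝ) (ht : t ∈ Set.Icc (0 : ℝ) 1) :
    (∀ R : ℝ,
      (∃ (l : ℕ) (β : Fin l → ℝ) (Q : Fin l → Fin m → ℝ),
        (∀ s, 0 ≤ β s) ∧ (∑ s, β s = 1) ∧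
        (∀ j, ∑ s, β s * allocD V w (Q s) j = x j) ∧
        R = ∑ s, β s * revD V w (Q s)) →
      ∃ (l' : ℕ) (β' : Fin l' → ℝ) (Q' : Fin l' → Fin m → ℝ),
        (∀ s, 0 ≤ β' s) ∧ (∑ s, β' s = 1) ∧
        (∀ j, ∑ s, β' s * allocD V w (Q' s) j = t * x j) ∧
        t * R ≤ ∑ s, β' s * revD V w (Q' s)) ∧
    t * SRev V w x ≤ SRev V w (fun j => t * x j) := by
  obtain ⟨ht0, ht1⟩ := ht
  constructor
  · rintro R ⟨l, β, Q, hβ, hβ1, hal, hRe⟩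
    obtain ⟨l', β', Q', h1, h2, h3, h4⟩ := scale_core V w hw ht0 ht1 l β Q hβ hβ1
    exact ⟨l', β', Q', h1, h2, fun j => by rw [h3 j, hal j],
      by rw [h4, hRe]⟩
  · -- second part
    have key : ∀ R ∈ {R | Achievable V w x R},
        t * R ∈ {R | Achievable V w (fun j => t * x j) R} := by
      rintro R ⟨l, β, Q, hβ, hβ1, hal, hRe⟩
      obtain ⟨l', β', Q', h1, h2, h3, h4⟩ := scale_core V w hw ht0 ht1 l β Q hβ hβ1
      exact ⟨l', β', Q', h1, h2,
        fun j => (h3 j).le.trans (mul_le_mul_of_nonneg_left (hal j) ht0),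
        by rw [h4, hRe]⟩
    have bdd := bddAbove_achievable V w hw (fun j => t * x j)
    by_cases hne : {R | Achievable V w x R}.Nonempty
    · obtain ⟨R0, hR0⟩ := hne
      have htx_ne : {R | Achievable V w (fun j => t * x j) R}.Nonempty :=
        ⟨t * R0, key R0 hR0⟩
      rcases eq_or_lt_of_le ht0 with h | h
      · subst h
        rw [zero_mul]
        exact le_csSup bdd (zero_achievable V w hw _ htx_ne)
      · have hle : SRev V w x ≤ SRev V w (fun j => t * x j) / t := by
          refine csSup_le ⟨R0, hR0⟩ fun R hR => ?_
          rw [le_div_iff₀ h, mul_comm]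
          exact le_csSup bdd (key R hR)
        calc t * SRev V w x ≤ t * (SRev V w (fun j => t * x j) / t) :=
              mul_le_mul_of_nonneg_left hle ht0
          _ = SRev V w (fun j => t * x j) := by field_simp
    · rw [Set.not_nonempty_iff_eq_empty] at hne
      unfold SRev
      rw [hne, Real.sSup_empty, mul_zero]
      by_cases h2 : {R | Achievable V w (fun j => t * x j) R}.Nonempty
      · exact le_csSup bdd (zero_achievable V w hw _ h2)
      · rw [Set.not_nonempty_iff_eq_empty] at h2
        rw [h2, Real.sSup_empty]
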